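/- Let m, k, n be positive integers with k ≤ m ≤ n. Then Σ_{T} N_T(n) = (m − k + 1) · S(m, m − k + 1) · (n − k)!, where the sum ranges over all subsets T of {1, ..., m} with |T| = k and m ∈ T, and N_T(n) denotes the number of inversion sequences (x_1, ..., x_n) of size n such that x_i ∉ T for all i. -/

import Mathlib

/-- The Stirling number of the second kind `S(n,k)`: the number of partitions of an
`n`-element set into exactly `k` nonempty blocks. -/
noncomputable def stirlingSecond (n k : ℕ) : ℕ :=
  Nat.card {P : Finpartition (Finset.univ : Finset (Fin n)) // P.parts.card = k}

open Finset

set_option linter.unusedSectionVars false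
set_option linter.unnecessarySeqFocus false

section StNumeric

/-- Numeric Stirling numbers of the second kind. -/
def st : ℕ → ℕ → ℕ
  | 0, 0 => 1
  | 0, _+1 => 0
  | _+1, 0 => 0
  | n+1, k+1 => (k+1) * st n (k+1) + st n k

@[simp] lemma st_zero_zero : st 0 0 = 1 := rfl
@[simp] lemma st_zero_succ (k : ℕ) : st 0 (k+1) = 0 := rfl
@[simp] lemma st_succ_zero (n : ℕ) : st (n+1) 0 = 0 := rfl
lemma st_succ_succ (n k : ℕ) : st (n+1) (k+1) = (k+1) * st n (k+1) + st n k := rfl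

lemma st_eq_zero_of_lt : ∀ {n k : ℕ}, n < k → st n k = 0 := by
  intro n
  induction n with
  | zero => intro k hk; cases k with
    | zero => omega
    | succ k => rfl
  | succ n ih =>
    intro k hk
    cases k with
    | zero => omega
    | succ k =>
      rw [st_succ_succ, ih (by omega), ih (by omega)]
      ring

lemma st_self (n : ℕ) : st n n = 1 := by
  induction n with
  | zero => rfl
  | succ n ih =>
    rw [st_succ_succ, ih, st_eq_zero_of_lt (Nat.lt_succ_self n)]
    ring

lemma st_one (n : ℕ) : st (n+1) 1 = 1 := by
  induction n with
  | zero => rfl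
  | succ n ih => rw [st_succ_succ, ih]; rfl

end StNumeric

section Partitions

variable {α : Type*} [DecidableEq α]

/-- Insert a new element `x` into the part `b` of a finpartition `Q` of `s`, where `x ∉ s`. -/
def Finpartition.insertPart {s : Finset α} (Q : Finpartition s) (x : α) (hx : x ∉ s)
    (b : Finset α) (hb : b ∈ Q.parts) : Finpartition (insert x s) where
  parts := insert (insert x b) (Q.parts.erase b)
  supIndep := by
    rw [Finset.supIndep_iff_pairwiseDisjoint, coe_insert]
    refine (Q.disjoint.subset (coe_subset.2 (erase_subset _ _))).insert ?_
    intro d hd hne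
    rw [mem_coe, mem_erase] at hd
    have hdb : Disjoint b d := Q.disjoint hb hd.2 (fun h => hd.1 h.symm)
    have hxd : x ∉ d := fun h => hx (Q.le hd.2 h)
    simp only [id]
    rw [Finset.disjoint_insert_left]
    exact ⟨hxd, hdb⟩
  sup_parts := by
    have h1 : (insert b (Q.parts.erase b)).sup id = s := by
      rw [insert_erase hb, Q.sup_parts]
    rw [sup_insert] at h1
    rw [sup_insert]
    simp only [id] at h1 ⊢
    rw [sup_eq_union] at h1 ⊢
    rw [insert_union, h1]
  bot_notMem := by
    rw [mem_insert]
    rintro (h | h)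
    · exact (insert_ne_empty x b) h.symm
    · exact Q.bot_notMem (mem_of_mem_erase h)

lemma Finpartition.insertPart_parts {s : Finset α} (Q : Finpartition s) (x : α) (hx : x ∉ s)
    (b : Finset α) (hb : b ∈ Q.parts) :
    (Q.insertPart x hx b hb).parts = insert (insert x b) (Q.parts.erase b) := rfl

lemma Finpartition.insertPart_card {s : Finset α} (Q : Finpartition s) (x : α) (hx : x ∉ s)
    (b : Finset α) (hb : b ∈ Q.parts) :
    (Q.insertPart x hx b hb).parts.card = Q.parts.card := by
  rw [insertPart_parts]
  have hnot : insert x b ∉ Q.parts.erase b := fun h => hx (Q.le (mem_of_mem_erase h) (mem_insert_self x b))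
  rw [card_insert_of_notMem hnot, card_erase_of_mem hb]
  have : Q.parts.Nonempty := ⟨b, hb⟩
  have := card_pos.2 this
  omega

section Rec
variable [Fintype α]

lemma not_mem_of_part {x : α} {Q : Finpartition ((univ : Finset α).erase x)}
    {d : Finset α} (hd : d ∈ Q.parts) : x ∉ d :=
  fun h => (notMem_erase x univ) (Q.le hd h)

/-- The double-counting map for the Stirling recurrence. -/
noncomputable def Phi (x : α) (k : ℕ) :
    ({Q : Finpartition ((univ : Finset α).erase x) // Q.parts.card = k}
      ⊕ (Σ Q : {Q : Finpartition ((univ : Finset α).erase x) // Q.parts.card = k+1},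
          {b // b ∈ Q.1.parts}))
    → {P : Finpartition (univ : Finset α) // P.parts.card = k+1} :=
  fun z => match z with
  | Sum.inl ⟨Q, hQ⟩ =>
      ⟨Q.extend (b := {x}) (singleton_ne_empty x)
        (by rw [Finset.disjoint_singleton_right]; exact notMem_erase x univ)
        (by rw [sup_eq_union, union_comm, ← insert_eq, insert_erase (mem_univ x)]),
       by rw [Finpartition.card_extend, hQ]⟩
  | Sum.inr ⟨⟨Q, hQ⟩, b, hb⟩ =>
      ⟨(Q.insertPart x (notMem_erase x univ) b hb).copy (insert_erase (mem_univ x)),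
       by rw [Finpartition.copy_parts, Finpartition.insertPart_card, hQ]⟩

lemma Phi_inl_parts (x : α) (k : ℕ) (Q : Finpartition ((univ : Finset α).erase x))
    (hQ : Q.parts.card = k) : (Phi x k (Sum.inl ⟨Q, hQ⟩)).1.parts = insert {x} Q.parts := rfl

lemma Phi_inr_parts (x : α) (k : ℕ) (Q : Finpartition ((univ : Finset α).erase x))
    (hQ : Q.parts.card = k+1) (b : Finset α) (hb : b ∈ Q.parts) :
    (Phi x k (Sum.inr ⟨⟨Q, hQ⟩, b, hb⟩)).1.parts = insert (insert x b) (Q.parts.erase b) := rfl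

lemma Phi_injective (x : α) (k : ℕ) : Function.Injective (Phi (α := α) x k) := by
  intro z₁ z₂ h
  have hparts := congrArg (fun w => w.1.parts) h
  rcases z₁ with ⟨Q₁, hQ₁⟩ | ⟨⟨Q₁, hQ₁⟩, b₁, hb₁⟩ <;>
    rcases z₂ with ⟨Q₂, hQ₂⟩ | ⟨⟨Q₂, hQ₂⟩, b₂, hb₂⟩
  · -- inl inl
    rw [Phi_inl_parts, Phi_inl_parts] at hparts
    have : Q₁.parts = Q₂.parts := by
      ext d
      constructor <;> intro hd
      · have hdx : d ≠ {x} := fun hdeq => not_mem_of_part hd (hdeq ▸ mem_singleton_self x)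
        have : d ∈ insert {x} Q₂.parts := hparts ▸ mem_insert_of_mem hd
        rcases mem_insert.1 this with h' | h'
        · exact absurd h' hdx
        · exact h'
      · have hdx : d ≠ {x} := fun hdeq => not_mem_of_part hd (hdeq ▸ mem_singleton_self x)
        have : d ∈ insert {x} Q₁.parts := hparts ▸ mem_insert_of_mem hd
        rcases mem_insert.1 this with h' | h'
        · exact absurd h' hdx
        · exact h'
    congr 1
    exact Subtype.ext (Finpartition.ext this)
  · -- inl inr : contradiction
    exfalso
    rw [Phi_inl_parts, Phi_inr_parts] at hparts
    obtain ⟨y, hy⟩ := Q₂.nonempty_of_mem_parts hb₂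
    have hyx : y ≠ x := fun h => not_mem_of_part hb₂ (h ▸ hy)
    have hmem : insert x b₂ ∈ insert ({x} : Finset α) Q₁.parts := by
      rw [hparts]; exact mem_insert_self _ _
    rcases mem_insert.1 hmem with h' | h'
    · have : y ∈ ({x} : Finset α) := h' ▸ mem_insert_of_mem hy
      exact hyx (mem_singleton.1 this)
    · exact not_mem_of_part h' (mem_insert_self x b₂)
  · -- inr inl : contradiction
    exfalso
    rw [Phi_inl_parts, Phi_inr_parts] at hparts
    obtain ⟨y, hy⟩ := Q₁.nonempty_of_mem_parts hb₁
    have hyx : y ≠ x := fun h => not_mem_of_part hb₁ (h ▸ hy)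
    have hmem : insert x b₁ ∈ insert ({x} : Finset α) Q₂.parts := by
      rw [← hparts]; exact mem_insert_self _ _
    rcases mem_insert.1 hmem with h' | h'
    · have : y ∈ ({x} : Finset α) := h' ▸ mem_insert_of_mem hy
      exact hyx (mem_singleton.1 this)
    · exact not_mem_of_part h' (mem_insert_self x b₁)
  · -- inr inr
    rw [Phi_inr_parts, Phi_inr_parts] at hparts
    have hxb₁ : x ∉ b₁ := not_mem_of_part hb₁
    have hxb₂ : x ∉ b₂ := not_mem_of_part hb₂
    have hbb : insert x b₁ = insert x b₂ := by
      have hmem : insert x b₁ ∈ insert (insert x b₂) (Q₂.parts.erase b₂) :=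
        hparts ▸ mem_insert_self _ _
      rcases mem_insert.1 hmem with h' | h'
      · exact h'
      · exact absurd (mem_insert_self x b₁) (fun hm => not_mem_of_part (mem_of_mem_erase h') hm)
    have hb12 : b₁ = b₂ := by
      rw [← erase_insert hxb₁, ← erase_insert hxb₂, hbb]
    subst hb12
    have herase : Q₁.parts.erase b₁ = Q₂.parts.erase b₁ := by
      ext d
      constructor <;> intro hd
      · have hxd : x ∉ d := not_mem_of_part (mem_of_mem_erase hd)
        have : d ∈ insert (insert x b₁) (Q₂.parts.erase b₁) := hparts ▸ mem_insert_of_mem hd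
        rcases mem_insert.1 this with h' | h'
        · exact absurd (h' ▸ mem_insert_self x b₁ : x ∈ d) hxd
        · exact h'
      · have hxd : x ∉ d := not_mem_of_part (mem_of_mem_erase hd)
        have : d ∈ insert (insert x b₁) (Q₁.parts.erase b₁) := hparts ▸ mem_insert_of_mem hd
        rcases mem_insert.1 this with h' | h'
        · exact absurd (h' ▸ mem_insert_self x b₁ : x ∈ d) hxd
        · exact h'
    have hQparts : Q₁.parts = Q₂.parts := by
      rw [← insert_erase hb₁, ← insert_erase hb₂, herase]
    have hQ : Q₁ = Q₂ := Finpartition.ext hQparts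
    subst hQ
    rfl

lemma avoid_parts_singleton [Fintype α] (x : α) (P : Finpartition (univ : Finset α))
    (hb₀ : {x} ∈ P.parts) : (P.avoid {x}).parts = P.parts.erase {x} := by
  ext c
  rw [Finpartition.mem_avoid, mem_erase]
  constructor
  · rintro ⟨d, hd, hdle, rfl⟩
    have hdx : d ≠ {x} := fun h => hdle (le_of_eq h)
    have hxd : x ∉ d := fun hxd =>
      hdx (P.eq_of_mem_parts hd hb₀ hxd (mem_singleton_self x))
    have hdd : d \ {x} = d := sdiff_eq_self_iff_disjoint.2 (disjoint_singleton_right.2 hxd)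
    rw [hdd]
    exact ⟨hdx, hd⟩
  · rintro ⟨hne, hc⟩
    have hxc : x ∉ c := fun hxc =>
      hne (P.eq_of_mem_parts hc hb₀ hxc (mem_singleton_self x))
    refine ⟨c, hc, ?_, ?_⟩
    · intro hle
      rcases subset_singleton_iff.1 hle with rfl | rfl
      · exact P.bot_notMem hc
      · exact hxc (mem_singleton_self x)
    · exact sdiff_eq_self_iff_disjoint.2 (disjoint_singleton_right.2 hxc)

lemma avoid_parts_general [Fintype α] (x : α) (P : Finpartition (univ : Finset α))
    (b₀ : Finset α) (hb₀ : b₀ ∈ P.parts) (hxb₀ : x ∈ b₀) (hne : b₀ ≠ {x}) :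
    (P.avoid {x}).parts = insert (b₀.erase x) (P.parts.erase b₀) := by
  ext c
  rw [Finpartition.mem_avoid, mem_insert, mem_erase]
  constructor
  · rintro ⟨d, hd, hdle, rfl⟩
    by_cases hdb : d = b₀
    · subst hdb
      left
      rw [← erase_eq]
    · right
      have hxd : x ∉ d := fun hxd => hdb (P.eq_of_mem_parts hd hb₀ hxd hxb₀)
      have hdd : d \ {x} = d := sdiff_eq_self_iff_disjoint.2 (disjoint_singleton_right.2 hxd)
      rw [hdd]
      exact ⟨hdb, hd⟩
  · rintro (rfl | ⟨hcb, hc⟩)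
    · refine ⟨b₀, hb₀, ?_, (erase_eq b₀ x).symm⟩
      intro hle
      rcases subset_singleton_iff.1 hle with rfl | rfl
      · exact P.bot_notMem hb₀
      · exact hne rfl
    · have hxc : x ∉ c := fun hxc => hcb (P.eq_of_mem_parts hc hb₀ hxc hxb₀)
      refine ⟨c, hc, ?_, sdiff_eq_self_iff_disjoint.2 (disjoint_singleton_right.2 hxc)⟩
      intro hle
      rcases subset_singleton_iff.1 hle with rfl | rfl
      · exact P.bot_notMem hc
      · exact hxc (mem_singleton_self x)

lemma Phi_surjective [Fintype α] (x : α) (k : ℕ) : Function.Surjective (Phi (α := α) x k) := by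
  rintro ⟨P, hP⟩
  obtain ⟨b₀, hb₀, hxb₀⟩ := P.exists_mem (mem_univ x)
  by_cases hcase : b₀ = {x}
  · subst hcase
    set Q₀ : Finpartition ((univ : Finset α).erase x) :=
      (P.avoid {x}).copy ((erase_eq univ x).symm) with hQ₀
    have hQparts : Q₀.parts = P.parts.erase {x} := by
      rw [hQ₀, Finpartition.copy_parts, avoid_parts_singleton x P hb₀]
    have hcard : Q₀.parts.card = k := by
      rw [hQparts, card_erase_of_mem hb₀, hP]
      omega
    refine ⟨Sum.inl ⟨Q₀, hcard⟩, ?_⟩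
    apply Subtype.ext
    apply Finpartition.ext
    rw [Phi_inl_parts, hQparts, insert_erase hb₀]
  · have hbne : (b₀.erase x).Nonempty := by
      by_contra h
      rw [not_nonempty_iff_eq_empty] at h
      apply hcase
      apply Finset.eq_singleton_iff_unique_mem.2
      refine ⟨hxb₀, fun y hy => ?_⟩
      by_contra hyx
      exact (Finset.notMem_empty y) (h ▸ Finset.mem_erase.2 ⟨hyx, hy⟩)
    set Q₀ : Finpartition ((univ : Finset α).erase x) :=
      (P.avoid {x}).copy ((erase_eq univ x).symm) with hQ₀
    have hQparts : Q₀.parts = insert (b₀.erase x) (P.parts.erase b₀) := by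
      rw [hQ₀, Finpartition.copy_parts, avoid_parts_general x P b₀ hb₀ hxb₀ hcase]
    have hnotmem : b₀.erase x ∉ P.parts.erase b₀ := by
      intro hmem
      rw [mem_erase] at hmem
      obtain ⟨y, hy⟩ := hbne
      have : b₀.erase x = b₀ := P.eq_of_mem_parts hmem.2 hb₀ hy (mem_of_mem_erase hy)
      exact hmem.1 this
    have hbmem : b₀.erase x ∈ Q₀.parts := by
      rw [hQparts]; exact mem_insert_self _ _
    have hcard : Q₀.parts.card = k+1 := by
      rw [hQparts, card_insert_of_notMem hnotmem, card_erase_of_mem hb₀, hP]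
      omega
    refine ⟨Sum.inr ⟨⟨Q₀, hcard⟩, ⟨b₀.erase x, hbmem⟩⟩, ?_⟩
    apply Subtype.ext
    apply Finpartition.ext
    rw [Phi_inr_parts, insert_erase hxb₀, hQparts, Finset.erase_insert (by intro hmem; exact hnotmem hmem : b₀.erase x ∉ P.parts.erase b₀),
      insert_erase hb₀]

end Rec

lemma rec_general [Fintype α] (x : α) (k : ℕ) :
    Nat.card {P : Finpartition (univ : Finset α) // P.parts.card = k+1}
      = (k+1) * Nat.card {Q : Finpartition ((univ : Finset α).erase x) // Q.parts.card = k+1}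
        + Nat.card {Q : Finpartition ((univ : Finset α).erase x) // Q.parts.card = k} := by
  classical
  have e := Equiv.ofBijective _ ⟨Phi_injective x k, Phi_surjective x k⟩
  rw [← Nat.card_congr e, Nat.card_eq_fintype_card, Fintype.card_sum, Fintype.card_sigma]
  have h1 : ∀ Q : {Q : Finpartition ((univ : Finset α).erase x) // Q.parts.card = k+1},
      Fintype.card {b // b ∈ Q.1.parts} = k+1 := fun Q => by
    rw [Fintype.card_coe, Q.2]
  rw [Fintype.sum_congr _ _ h1, Finset.sum_const, Finset.card_univ, smul_eq_mul]
  rw [Nat.card_eq_fintype_card, Nat.card_eq_fintype_card]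
  ring

end Partitions

section Transport

variable {α β : Type*} [DecidableEq α] [DecidableEq β]

lemma sup_map_finsets (g : α ↪ β) (A : Finset (Finset α)) :
    (A.sup id).map g = A.sup (fun d => d.map g) := by
  induction A using Finset.induction_on with
  | empty => simp
  | insert a s _ ih =>
    rw [sup_insert, sup_insert, ← ih]
    simp only [id, sup_eq_union, map_union]

/-- Transport a finpartition along an embedding. -/
def Finpartition.mapEmb (g : α ↪ β) {s : Finset α} (P : Finpartition s) :
    Finpartition (s.map g) where
  parts := P.parts.image (fun d => d.map g)
  supIndep := by
    rw [Finset.supIndep_iff_pairwiseDisjoint]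
    intro a ha b hb hab
    simp only [coe_image, Set.mem_image, mem_coe] at ha hb
    obtain ⟨da, hda, rfl⟩ := ha
    obtain ⟨db, hdb, rfl⟩ := hb
    have hne : da ≠ db := fun h => hab (by rw [h])
    have hd := P.disjoint hda hdb hne
    simp only [Function.onFun, id] at hd ⊢
    rw [Finset.disjoint_map]
    exact hd
  sup_parts := by
    rw [sup_image]
    simp only [Function.id_comp]
    rw [← sup_map_finsets, P.sup_parts]
  bot_notMem := by
    simp only [bot_eq_empty, mem_image]
    rintro ⟨d, hd, hmap⟩
    rw [Finset.map_eq_empty] at hmap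
    exact P.bot_notMem (by rwa [hmap] at hd)

lemma Finpartition.mapEmb_parts (g : α ↪ β) {s : Finset α} (P : Finpartition s) :
    (P.mapEmb g).parts = P.parts.image (fun d => d.map g) := rfl

/-- The forward map on partitions-with-j-parts. -/
def Fmap (g : α ↪ β) (s : Finset α) (j : ℕ) :
    {P : Finpartition s // P.parts.card = j} → {P : Finpartition (s.map g) // P.parts.card = j} :=
  fun P => ⟨P.1.mapEmb g, by
    rw [Finpartition.mapEmb_parts, card_image_of_injective _ (Finset.map_injective g), P.2]⟩

lemma card_finpartition_map (g : α ↪ β) (s : Finset α) (j : ℕ) :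
    Nat.card {P : Finpartition (s.map g) // P.parts.card = j}
      = Nat.card {P : Finpartition s // P.parts.card = j} := by
  classical
  have hinj : Function.Injective (fun d : Finset α => d.map g) := Finset.map_injective g
  have hFinj : Function.Injective (Fmap g s j) := by
    rintro ⟨P₁, h₁⟩ ⟨P₂, h₂⟩ h
    have hparts : P₁.parts.image (fun d => d.map g) = P₂.parts.image (fun d => d.map g) := by
      have := congrArg (fun w => w.1.parts) h
      simpa [Fmap, Finpartition.mapEmb_parts] using this
    exact Subtype.ext (Finpartition.ext (Finset.image_injective hinj hparts))
  have hFsurj : Function.Surjective (Fmap g s j) := by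
    rintro ⟨Q, hQ⟩
    have hsub : ∀ d ∈ Q.parts, d ⊆ s.map g := fun d hd => Q.le hd
    have hrep : ∀ d ∈ Q.parts, (d.preimage g (g.injective.injOn)).map g = d := by
      intro d hd
      rw [map_eq_image, image_preimage]
      ext b
      simp only [mem_filter]
      constructor
      · rintro ⟨hb, _⟩; exact hb
      · intro hb
        refine ⟨hb, ?_⟩
        have := hsub d hd hb
        rw [mem_map] at this
        obtain ⟨a, _, rfl⟩ := this
        simp
    set prts := Q.parts.image (fun d => d.preimage g (g.injective.injOn)) with hprts
    have himg : prts.image (fun d => d.map g) = Q.parts := by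
      rw [hprts, image_image]
      calc Q.parts.image ((fun d => d.map g) ∘ (fun d => d.preimage g (g.injective.injOn)))
          = Q.parts.image id := image_congr (fun d hd => hrep d hd)
        _ = Q.parts := image_id
    have hsupIndep : prts.SupIndep id := by
      rw [Finset.supIndep_iff_pairwiseDisjoint]
      intro a ha b hb hab
      simp only [hprts, coe_image, Set.mem_image, mem_coe] at ha hb
      obtain ⟨da, hda, rfl⟩ := ha
      obtain ⟨db, hdb, rfl⟩ := hb
      have hne : da ≠ db := fun h => hab (by rw [h])
      have hd := Q.disjoint hda hdb hne
      simp only [Function.onFun, id] at hd ⊢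
      rw [Finset.disjoint_left] at hd ⊢
      intro a haa hab2
      rw [mem_preimage] at haa hab2
      exact hd haa hab2
    have hsup : prts.sup id = s := by
      have hms : (prts.sup id).map g = s.map g := by
        rw [sup_map_finsets, ← Q.sup_parts, hprts, sup_image]
        refine Finset.sup_congr rfl fun d hd => hrep d hd
      exact Finset.map_injective g hms
    have hnb : ⊥ ∉ prts := by
      rw [hprts]
      simp only [bot_eq_empty, mem_image]
      rintro ⟨d, hd, hpre⟩
      have hrd := hrep d hd
      rw [hpre] at hrd
      simp only [map_empty] at hrd
      exact Q.bot_notMem (by rwa [← hrd] at hd)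
    have hcard : prts.card = j := by
      have h1 : prts.card ≤ Q.parts.card := by rw [hprts]; exact card_image_le
      have h2 : Q.parts.card ≤ prts.card := by
        conv_lhs => rw [← himg]
        exact card_image_le
      omega
    refine ⟨⟨⟨prts, hsupIndep, hsup, hnb⟩, hcard⟩, ?_⟩
    apply Subtype.ext
    apply Finpartition.ext
    show (Finpartition.mapEmb g _).parts = Q.parts
    rw [Finpartition.mapEmb_parts]
    exact himg
  exact (Nat.card_eq_of_bijective (Fmap g s j) ⟨hFinj, hFsurj⟩).symm

end Transport

section StirlingEq


lemma parts_empty_of_fin0 (P : Finpartition (univ : Finset (Fin 0))) : P.parts = ∅ := by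
  ext d
  simp only [Finset.notMem_empty, iff_false]
  intro hd
  obtain ⟨y, hy⟩ := P.nonempty_of_mem_parts hd
  exact absurd (P.le hd hy) (by simp)

lemma stirling_zero_zero : stirlingSecond 0 0 = 1 := by
  rw [stirlingSecond]
  have hu : ∀ P : Finpartition (univ : Finset (Fin 0)), P.parts.card = 0 := fun P => by
    rw [parts_empty_of_fin0 P]; rfl
  have : Nonempty {P : Finpartition (univ : Finset (Fin 0)) // P.parts.card = 0} := by
    refine ⟨⟨(Finpartition.empty (Finset (Fin 0))).copy ?_, hu _⟩⟩
    simp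
  rw [Nat.card_eq_one_iff_unique]
  refine ⟨⟨fun a b => ?_⟩, this⟩
  apply Subtype.ext
  apply Finpartition.ext
  rw [parts_empty_of_fin0, parts_empty_of_fin0]

lemma stirling_zero_succ (k : ℕ) : stirlingSecond 0 (k+1) = 0 := by
  rw [stirlingSecond]
  have : IsEmpty {P : Finpartition (univ : Finset (Fin 0)) // P.parts.card = k+1} := by
    refine ⟨fun ⟨P, hP⟩ => ?_⟩
    rw [parts_empty_of_fin0 P] at hP
    simp at hP
  exact Nat.card_of_isEmpty

lemma stirling_succ_zero (n : ℕ) : stirlingSecond (n+1) 0 = 0 := by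
  rw [stirlingSecond]
  have : IsEmpty {P : Finpartition (univ : Finset (Fin (n+1))) // P.parts.card = 0} := by
    refine ⟨fun ⟨P, hP⟩ => ?_⟩
    rw [Finset.card_eq_zero] at hP
    have := P.sup_parts
    rw [hP] at this
    simp only [Finset.sup_empty] at this
    have h0 : (0 : Fin (n+1)) ∈ (univ : Finset (Fin (n+1))) := mem_univ _
    rw [← this] at h0
    exact absurd h0 (by simp)
  exact Nat.card_of_isEmpty

lemma erase_last (n : ℕ) : (univ : Finset (Fin (n+1))).erase (Fin.last n)
    = (univ : Finset (Fin n)).map Fin.castSuccEmb := by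
  ext i
  simp only [mem_erase, mem_univ, and_true, mem_map]
  constructor
  · intro h
    obtain ⟨j, hj⟩ := Fin.exists_castSucc_eq.2 h
    exact ⟨j, trivial, hj⟩
  · rintro ⟨j, _, rfl⟩
    exact Fin.castSucc_lt_last j |>.ne

lemma stirling_rec (n k : ℕ) :
    stirlingSecond (n+1) (k+1) = (k+1) * stirlingSecond n (k+1) + stirlingSecond n k := by
  rw [stirlingSecond, rec_general (Fin.last n) k, erase_last,
    card_finpartition_map, card_finpartition_map]
  rfl

theorem stirling_eq_st (n : ℕ) : ∀ k, stirlingSecond n k = st n k := by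
  induction n with
  | zero =>
    intro k
    cases k with
    | zero => rw [stirling_zero_zero]; rfl
    | succ k => rw [stirling_zero_succ]; rfl
  | succ n ih =>
    intro k
    cases k with
    | zero => rw [stirling_succ_zero]; rfl
    | succ k =>
      rw [stirling_rec, ih (k+1), ih k]
      rfl

end StirlingEq

section SumIdentity


def SUMf (p c : ℕ) : ℕ :=
  ∑ S ∈ (Icc 1 p).powerset.filter (fun S => S.card = c),
    ∏ i ∈ range (p+1), ((range (i+1)) \ S).card

lemma card_sdiff_range {S : Finset ℕ} {q i : ℕ} (hS : S ⊆ Icc 1 q) (hq : q ≤ i) :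
    ((range (i+1)) \ S).card = i + 1 - S.card := by
  have h : S ⊆ range (i+1) := fun a ha => by
    have := hS ha; rw [mem_Icc] at this; rw [mem_range]; omega
  rw [card_sdiff_of_subset h, card_range]

lemma sdiff_insert_high {S : Finset ℕ} {i q : ℕ} (hq : i ≤ q) :
    range i \ insert q S = range i \ S := by
  ext a
  simp only [mem_sdiff, mem_range, mem_insert]
  constructor
  · rintro ⟨h1, h2⟩; exact ⟨h1, fun h => h2 (Or.inr h)⟩
  · rintro ⟨h1, h2⟩
    refine ⟨h1, ?_⟩
    rintro (rfl | h)
    · omega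
    · exact h2 h


lemma prod_range_card (n : ℕ) : ∏ i ∈ range n, (range (i+1)).card = Nat.factorial n := by
  induction n with
  | zero => rfl
  | succ n ih => rw [prod_range_succ, ih, card_range, Nat.factorial_succ, mul_comm]


lemma SUMf_rec (p c : ℕ) : SUMf (p+1) (c+1) = (p+1-c) * (SUMf p (c+1) + SUMf p c) := by
  classical
  set f : Finset ℕ → ℕ := fun S => ∏ i ∈ range (p+1+1), ((range (i+1)) \ S).card with hf
  have hsplit := sum_filter_add_sum_filter_not
    ((Icc 1 (p+1)).powerset.filter (fun S => S.card = c+1)) (fun S => p+1 ∈ S) f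
  have hA : SUMf (p+1) (c+1)
      = ∑ S ∈ (Icc 1 (p+1)).powerset.filter (fun S => S.card = c+1), f S := rfl
  -- the part not containing p+1
  have hB : ((Icc 1 (p+1)).powerset.filter (fun S => S.card = c+1)).filter (fun S => ¬ p+1 ∈ S)
      = (Icc 1 p).powerset.filter (fun S => S.card = c+1) := by
    ext S
    simp only [mem_filter, mem_powerset]
    constructor
    · rintro ⟨⟨h1, h2⟩, h3⟩
      refine ⟨fun a ha => ?_, h2⟩
      have := h1 ha
      rw [mem_Icc] at this ⊢
      have : a ≠ p+1 := fun h => h3 (h ▸ ha)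
      omega
    · rintro ⟨h1, h2⟩
      have hsub : S ⊆ Icc 1 (p+1) := fun a ha => by
        have := h1 ha; rw [mem_Icc] at this ⊢; omega
      refine ⟨⟨hsub, h2⟩, fun hmem => ?_⟩
      have := h1 hmem; rw [mem_Icc] at this; omega
  have hBsum : ∑ S ∈ (Icc 1 p).powerset.filter (fun S => S.card = c+1), f S
      = SUMf p (c+1) * (p+1-c) := by
    rw [SUMf, sum_mul]
    refine sum_congr rfl fun S hS => ?_
    simp only [mem_filter, mem_powerset] at hS
    rw [hf]
    simp only
    rw [prod_range_succ, card_sdiff_range hS.1 (by omega : p ≤ p+1), hS.2]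
    congr 1
    omega
  -- the part containing p+1
  have hC : ((Icc 1 (p+1)).powerset.filter (fun S => S.card = c+1)).filter (fun S => p+1 ∈ S)
      = ((Icc 1 p).powerset.filter (fun S => S.card = c)).image (insert (p+1)) := by
    ext S
    simp only [mem_filter, mem_powerset, mem_image]
    constructor
    · rintro ⟨⟨h1, h2⟩, h3⟩
      refine ⟨S.erase (p+1), ⟨fun a ha => ?_, ?_⟩, insert_erase h3⟩
      · rw [mem_erase] at ha
        have := h1 ha.2
        rw [mem_Icc] at this ⊢
        have := ha.1
        omega
      · rw [card_erase_of_mem h3, h2]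
        omega
    · rintro ⟨S', ⟨h1, h2⟩, rfl⟩
      have hnot : p+1 ∉ S' := fun h => by
        have := h1 h; rw [mem_Icc] at this; omega
      refine ⟨⟨?_, ?_⟩, mem_insert_self _ _⟩
      · intro a ha
        rw [mem_insert] at ha
        rcases ha with rfl | ha
        · rw [mem_Icc]; omega
        · have := h1 ha; rw [mem_Icc] at this ⊢; omega
      · rw [card_insert_of_notMem hnot, h2]
  have hinj : ∀ S₁ ∈ (Icc 1 p).powerset.filter (fun S => S.card = c),
      ∀ S₂ ∈ (Icc 1 p).powerset.filter (fun S => S.card = c),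
      insert (p+1) S₁ = insert (p+1) S₂ → S₁ = S₂ := by
    intro S₁ h₁ S₂ h₂ h
    simp only [mem_filter, mem_powerset] at h₁ h₂
    have n₁ : p+1 ∉ S₁ := fun hmem => by have := h₁.1 hmem; rw [mem_Icc] at this; omega
    have n₂ : p+1 ∉ S₂ := fun hmem => by have := h₂.1 hmem; rw [mem_Icc] at this; omega
    rw [← erase_insert n₁, ← erase_insert n₂, h]
  have hCsum : ∑ S ∈ ((Icc 1 p).powerset.filter (fun S => S.card = c)).image (insert (p+1)), f S
      = SUMf p c * (p+1-c) := by
    rw [sum_image hinj, SUMf, sum_mul]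
    refine sum_congr rfl fun S hS => ?_
    simp only [mem_filter, mem_powerset] at hS
    rw [hf]
    simp only
    rw [prod_range_succ]
    have hins : insert (p+1) S ⊆ Icc 1 (p+1) := by
      intro a ha
      rw [mem_insert] at ha
      rcases ha with rfl | ha
      · rw [mem_Icc]; omega
      · have := hS.1 ha; rw [mem_Icc] at this ⊢; omega
    have hnot : p+1 ∉ S := fun h => by have := hS.1 h; rw [mem_Icc] at this; omega
    have hcard : (insert (p+1) S).card = c + 1 := by rw [card_insert_of_notMem hnot, hS.2]
    rw [card_sdiff_range hins (le_refl (p+1)), hcard]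
    have hprod : ∏ i ∈ range (p+1), ((range (i+1)) \ insert (p+1) S).card
        = ∏ i ∈ range (p+1), ((range (i+1)) \ S).card := by
      refine prod_congr rfl fun i hi => ?_
      rw [mem_range] at hi
      rw [sdiff_insert_high (by omega : i+1 ≤ p+1)]
    rw [hprod]
    congr 1
    omega
  rw [hA, ← hsplit, hC, hCsum, hB, hBsum]
  ring

theorem SUMf_eq (p : ℕ) : ∀ c, SUMf p c = (p+1-c) * Nat.factorial (p-c) * st (p+1) (p+1-c) := by
  induction p with
  | zero =>
    intro c
    cases c with
    | zero =>
      have h : (Icc 1 0).powerset.filter (fun S => S.card = 0) = {(∅ : Finset ℕ)} := by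
        ext S
        simp [Finset.card_eq_zero, Finset.subset_empty]
      simp [SUMf, h, st_self, Finset.filter_singleton]
    | succ c =>
      have h : (Icc 1 0).powerset.filter (fun S => S.card = c+1) = ∅ := by
        ext S
        simp only [mem_filter, mem_powerset, Finset.notMem_empty, iff_false, not_and]
        intro hS hc
        rw [Finset.Icc_eq_empty (by omega), Finset.subset_empty] at hS
        subst hS; simp at hc
      simp [SUMf, h]
  | succ p ih =>
    intro c
    cases c with
    | zero =>
      have h : (Icc 1 (p+1)).powerset.filter (fun S => S.card = 0) = {(∅ : Finset ℕ)} := by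
        ext S
        simp only [mem_filter, mem_powerset, Finset.card_eq_zero, mem_singleton]
        constructor
        · rintro ⟨_, rfl⟩; rfl
        · rintro rfl; exact ⟨empty_subset _, rfl⟩
      simp only [SUMf, h, sum_singleton, Nat.sub_zero]
      rw [st_self]
      simp only [sdiff_empty]
      rw [prod_range_card]
      rw [Nat.factorial_succ]
      ring
    | succ c =>
      -- recurrence
      by_cases hc : c + 1 ≤ p + 1
      case neg =>
        -- empty sum, zero RHS
        have h : (Icc 1 (p+1)).powerset.filter (fun S => S.card = c+1) = ∅ := by
          ext S
          simp only [mem_filter, mem_powerset, Finset.notMem_empty, iff_false, not_and]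
          intro hS hcard
          have h2 := Finset.card_le_card hS
          rw [Nat.card_Icc] at h2
          omega
        have h3 : p + 1 - (c+1) = 0 := by omega
        simp [SUMf, h, h3]
        exact Or.inl (by omega)
      case pos =>
        have key : SUMf (p+1) (c+1) = (p+1-c) * (SUMf p (c+1) + SUMf p c) := SUMf_rec p c
        rw [key, ih (c+1), ih c]
        -- numeric identity
        obtain ⟨j, hj⟩ : ∃ j, p = c + j := ⟨p - c, by omega⟩
        subst hj
        have e1 : c + j + 1 - (c + 1) = j := by omega
        have e2 : c + j - (c+1) = j - 1 := by omega
        have e3 : c + j + 1 - c = j + 1 := by omega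
        have e4 : c + j - c = j := by omega
        have e5 : c + j + 1 + 1 - (c+1) = j+1 := by omega
        rw [e1, e2, e3, e4, e5]
        cases j with
        | zero =>
          simp [st_succ_succ, st_succ_zero, st_one]
        | succ j =>
          have hst : st (c + (j+1) + 1 + 1) (j + 1 + 1)
              = (j+1+1) * st (c+(j+1)+1) (j+1+1) + st (c+(j+1)+1) (j+1) := st_succ_succ _ _
          rw [hst]
          have h1 : j + 1 - 1 = j := by omega
          rw [h1]
          have h2 : Nat.factorial (j+1) = (j+1) * Nat.factorial j := Nat.factorial_succ j
          rw [h2]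
          ring

end SumIdentity


/-- Part I: the count of avoiding inversion sequences as a product. -/
lemma card_avoid (n : ℕ) (T : Finset ℕ) :
    Nat.card {x : Fin n → ℕ // (∀ i, x i ≤ (i : ℕ)) ∧ ∀ i, x i ∉ T}
      = ∏ i ∈ range n, ((range (i+1)) \ T).card := by
  classical
  have e : {x : Fin n → ℕ // (∀ i, x i ≤ (i : ℕ)) ∧ ∀ i, x i ∉ T}
      ≃ ∀ i : Fin n, ↥((range ((i : ℕ)+1)) \ T) :=
    { toFun := fun x i => ⟨x.1 i, by
        rw [mem_sdiff, mem_range]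
        exact ⟨Nat.lt_succ_of_le (x.2.1 i), x.2.2 i⟩⟩
      invFun := fun g => ⟨fun i => (g i).1, by
        constructor
        · intro i
          have h2 := (g i).2
          rw [mem_sdiff, mem_range] at h2
          exact Nat.lt_succ_iff.mp h2.1
        · intro i
          have := (g i).2
          rw [mem_sdiff] at this
          exact this.2⟩
      left_inv := fun x => rfl
      right_inv := fun g => rfl }
  rw [Nat.card_congr e, Nat.card_pi]
  have : ∀ i : Fin n, Nat.card ↥((range ((i : ℕ)+1)) \ T) = ((range ((i : ℕ)+1)) \ T).card :=
    fun i => Nat.card_eq_finsetCard _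
  rw [Fintype.prod_congr _ _ this]
  exact Fin.prod_univ_eq_prod_range (fun i => ((range (i+1)) \ T).card) n

/-- tail product -/
lemma tail_prod (k m : ℕ) (hkm : k ≤ m) : ∀ n, m ≤ n →
    Nat.factorial (m - k) * ∏ i ∈ Ico m n, (i + 1 - k) = Nat.factorial (n - k) := by
  intro n
  induction n with
  | zero => intro h; interval_cases m <;> simp
  | succ n ihn =>
    intro h
    rcases Nat.lt_or_ge m (n+1) with h2 | h2
    · have hmn : m ≤ n := by omega
      rw [Finset.prod_Ico_succ_top hmn, ← mul_assoc, ihn hmn]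
      have : n + 1 - k = (n - k) + 1 := by omega
      rw [this, Nat.factorial_succ, mul_comm]
    · have : m = n + 1 := by omega
      subst this
      simp

/-- for `1 ≤ k ≤ m ≤ n`, summing over all `T ⊆ {1,…,m}` with `|T| = k` and
`m ∈ T` the number of inversion sequences of size `n` avoiding all values in `T` gives
`(m − k + 1) · S(m, m − k + 1) · (n − k)!`.  Inversion sequences of size `n` are encoded
as `x : Fin n → ℕ` with `x i ≤ i` (the `0`-indexed form of `x_i ≤ i − 1`). -/
theorem stmt_11 (m k n : ℕ) (hk : 1 ≤ k) (hkm : k ≤ m) (hmn : m ≤ n) :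
    ∑ T ∈ (Finset.Icc 1 m).powerset.filter (fun T => T.card = k ∧ m ∈ T),
        Nat.card {x : Fin n → ℕ // (∀ i, x i ≤ (i : ℕ)) ∧ ∀ i, x i ∉ T} =
      (m - k + 1) * stirlingSecond m (m - k + 1) * Nat.factorial (n - k) := by
  classical
  have hm1 : m - 1 + 1 = m := by omega
  have hsum : ∑ T ∈ (Icc 1 m).powerset.filter (fun T => T.card = k ∧ m ∈ T),
      Nat.card {x : Fin n → ℕ // (∀ i, x i ≤ (i : ℕ)) ∧ ∀ i, x i ∉ T}
    = ∑ T ∈ (Icc 1 m).powerset.filter (fun T => T.card = k ∧ m ∈ T),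
        (∏ i ∈ range m, ((range (i+1)) \ T).card) * ∏ i ∈ Ico m n, (i+1-k) := by
    refine sum_congr rfl fun T hT => ?_
    simp only [mem_filter, mem_powerset] at hT
    rw [card_avoid, ← Finset.prod_range_mul_prod_Ico _ hmn]
    congr 1
    refine prod_congr rfl fun i hi => ?_
    rw [mem_Ico] at hi
    rw [card_sdiff_range hT.1 hi.1, hT.2.1]
  rw [hsum, ← sum_mul]
  clear hsum
  have himg : (Icc 1 m).powerset.filter (fun T => T.card = k ∧ m ∈ T)
      = ((Icc 1 (m-1)).powerset.filter (fun S => S.card = k-1)).image (insert m) := by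
    ext T
    simp only [mem_filter, mem_powerset, mem_image]
    constructor
    · rintro ⟨h1, h2, h3⟩
      refine ⟨T.erase m, ⟨fun a ha => ?_, ?_⟩, insert_erase h3⟩
      · rw [mem_erase] at ha
        have h4 := h1 ha.2
        rw [mem_Icc] at h4 ⊢
        have := ha.1
        omega
      · rw [card_erase_of_mem h3, h2]
    · rintro ⟨S, ⟨h1, h2⟩, rfl⟩
      have hnot : m ∉ S := fun h => by have := h1 h; rw [mem_Icc] at this; omega
      refine ⟨?_, ?_, mem_insert_self _ _⟩
      · intro a ha
        rw [mem_insert] at ha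
        rcases ha with rfl | ha
        · rw [mem_Icc]; omega
        · have := h1 ha; rw [mem_Icc] at this ⊢; omega
      · rw [card_insert_of_notMem hnot, h2]; omega
  have hinj : ∀ S₁ ∈ (Icc 1 (m-1)).powerset.filter (fun S => S.card = k-1),
      ∀ S₂ ∈ (Icc 1 (m-1)).powerset.filter (fun S => S.card = k-1),
      insert m S₁ = insert m S₂ → S₁ = S₂ := by
    intro S₁ h₁ S₂ h₂ h
    simp only [mem_filter, mem_powerset] at h₁ h₂
    have n₁ : m ∉ S₁ := fun hmem => by have := h₁.1 hmem; rw [mem_Icc] at this; omega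
    have n₂ : m ∉ S₂ := fun hmem => by have := h₂.1 hmem; rw [mem_Icc] at this; omega
    rw [← erase_insert n₁, ← erase_insert n₂, h]
  rw [himg, sum_image hinj]
  have hmain : ∑ S ∈ (Icc 1 (m-1)).powerset.filter (fun S => S.card = k-1),
      ∏ i ∈ range m, ((range (i+1)) \ insert m S).card = SUMf (m-1) (k-1) := by
    rw [SUMf, hm1]
    refine sum_congr rfl fun S hS => ?_
    refine prod_congr rfl fun i hi => ?_
    rw [mem_range] at hi
    rw [sdiff_insert_high (by omega : i+1 ≤ m)]
  rw [hmain, SUMf_eq]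
  have e1 : m - 1 + 1 - (k-1) = m - k + 1 := by omega
  have e2 : m - 1 - (k-1) = m - k := by omega
  rw [e1, e2, hm1, stirling_eq_st]
  calc (m - k + 1) * Nat.factorial (m-k) * st m (m-k+1) * ∏ i ∈ Ico m n, (i+1-k)
      = (m - k + 1) * st m (m-k+1) * (Nat.factorial (m-k) * ∏ i ∈ Ico m n, (i+1-k)) := by ring
    _ = (m - k + 1) * st m (m-k+1) * Nat.factorial (n-k) := by rw [tail_prod k m hkm n hmn]
    _ = (m - k + 1) * st m (m - k + 1) * Nat.factorial (n - k) := rfl
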